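/- Let Θ = [−1,1]² ⊂ ℝ², g₁(θ) = θ₁²(θ₂ + θ₁²), g₂(θ) = θ₂ (two inequality constraints, no equalities), Θ_I = {θ ∈ Θ : g₁(θ) ≤ 0, g₂(θ) ≤ 0}, and p = (0,1). Then: (a) S(p,Θ_I) = {(0,0)}; (b) the Abadie constraint qualification holds at (0,0): T((0,0)) = L((0,0)) = {t ∈ ℝ² : t₂ ≤ 0}; but (c) Assumption 3' fails at (0,0): for every η > 0 and C > 0 there exists θ ∈ Θ with ‖θ‖ ≤ η such that Q(θ) < C·d(θ,Θ_I), where d(θ,Θ_I) = inf{‖θ−a‖ : a ∈ Θ_I}. -/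

import Mathlib

open Filter Topology Metric RealInnerProductSpace

noncomputable section

/-- Two-dimensional Euclidean parameter space. -/
abbrev E2 := EuclideanSpace ℝ (Fin 2)

/-- The parameter space `Θ = [-1,1]²`. -/
def Box : Set E2 := {θ | θ 0 ∈ Set.Icc (-1:ℝ) 1 ∧ θ 1 ∈ Set.Icc (-1:ℝ) 1}

/-- The direction of projection `p = (0,1)`. -/
def pvec : E2 := EuclideanSpace.single 1 1

/-- The support set `S(p, Θ_I)`: maximizers of `θ ↦ ⟪p, θ⟫` over `Θ_I`. -/
def suppSet (ΘI : Set E2) (p : E2) : Set E2 :=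
  {θ ∈ ΘI | ∀ θ' ∈ ΘI, ⟪p, θ'⟫ ≤ ⟪p, θ⟫}

/-- The tangent cone `T(θ*)` to `Θ_I` at `θ*`. -/
def tcone (ΘI : Set E2) (θs : E2) : Set E2 :=
  insert 0 {t | ∃ u : ℕ → E2,
    (∀ n, u n ∈ ΘI ∧ u n ≠ θs) ∧ Tendsto u atTop (𝓝 θs) ∧
    Tendsto (fun n => ‖u n - θs‖⁻¹ • (u n - θs)) atTop (𝓝 (‖t‖⁻¹ • t))}

/-- The linearized cone `L(θ*)` (all constraints are inequality constraints). -/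
def lcone {J : ℕ} (g : Fin J → E2 → ℝ) (θs : E2) : Set E2 :=
  {t | ∀ j, g j θs = 0 → ⟪gradient (g j) θs, t⟫ ≤ 0}

/-- The criterion `Q(θ) = max{0, max_j g_j(θ)}` (all constraints are inequalities). -/
def Qcrit {J : ℕ} (g : Fin J → E2 → ℝ) (θ : E2) : ℝ :=
  max 0 (⨆ j, g j θ)

/-- The two constraints `g₁(θ) = θ₁²(θ₂ + θ₁²)` and `g₂(θ) = θ₂`. -/
def gEx16 : Fin 2 → E2 → ℝ :=
  ![fun θ => (θ 0) ^ 2 * (θ 1 + (θ 0) ^ 2), fun θ => θ 1]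

/-- The identified set of the third counterexample. -/
def idSetEx16 : Set E2 := {θ ∈ Box | ∀ j, gEx16 j θ ≤ 0}

lemma mem_idSet_iff (θ : E2) : θ ∈ idSetEx16 ↔
    θ ∈ Box ∧ (θ 0) ^ 2 * (θ 1 + (θ 0) ^ 2) ≤ 0 ∧ θ 1 ≤ 0 := by
  simp [idSetEx16, Fin.forall_fin_two, gEx16]; tauto

lemma zero_mem : (0 : E2) ∈ idSetEx16 := by
  rw [mem_idSet_iff]
  refine ⟨⟨?_, ?_⟩, ?_, ?_⟩ <;> simp

lemma e2_ext {x y : E2} (h0 : x 0 = y 0) (h1 : x 1 = y 1) : x = y := by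
  ext i; fin_cases i <;> assumption

lemma inner_pvec (v : E2) : ⟪pvec, v⟫ = v 1 := by
  simp [pvec, EuclideanSpace.inner_single_left]

lemma suppSet_eq : suppSet idSetEx16 pvec = {0} := by
  ext θ
  simp only [suppSet, Set.mem_setOf_eq, Set.mem_singleton_iff]
  constructor
  · rintro ⟨hθ, hmax⟩
    obtain ⟨hbox, hg0, hg1⟩ := (mem_idSet_iff θ).mp hθ
    have h01 : (0:ℝ) ≤ θ 1 := by
      have := hmax 0 zero_mem
      rw [inner_pvec, inner_pvec] at this
      simpa using this
    have hθ1 : θ 1 = 0 := le_antisymm hg1 h01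
    have hθ0 : θ 0 = 0 := by
      rw [hθ1] at hg0
      have h2 : (θ 0)^2 ≤ 0 := by nlinarith
      have h2' : (θ 0)^2 = 0 := le_antisymm h2 (sq_nonneg _)
      exact pow_eq_zero_iff (two_ne_zero) |>.mp h2'
    exact e2_ext (by simpa using hθ0) (by simpa using hθ1)
  · rintro rfl
    refine ⟨zero_mem, fun θ' hθ' => ?_⟩
    rw [inner_pvec, inner_pvec]
    have := ((mem_idSet_iff θ').mp hθ').2.2
    simpa using this

lemma hproj (i : Fin 2) (x : E2) :
    HasFDerivAt (fun θ : E2 => θ i) (EuclideanSpace.proj i : E2 →L[ℝ] ℝ) x :=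
  (EuclideanSpace.proj i : E2 →L[ℝ] ℝ).hasFDerivAt

lemma grad_g0 : gradient (gEx16 0) 0 = 0 := by
  have hu : HasFDerivAt (fun θ : E2 => (θ 0) ^ 2) (0 : E2 →L[ℝ] ℝ) 0 := by
    have h := (hproj 0 0).mul (hproj 0 0)
    simp only [show ((0:E2) 0) = (0:ℝ) by simp, zero_smul, add_zero, zero_add] at h
    have h' := h.congr_of_eventuallyEq (f₁ := fun θ : E2 => (θ 0) ^ 2)
      (Eventually.of_forall fun θ => by simp [pow_two])
    simpa using h'
  have hv : HasFDerivAt (fun θ : E2 => θ 1 + (θ 0) ^ 2)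
      ((EuclideanSpace.proj 1 : E2 →L[ℝ] ℝ) + 0) 0 := (hproj 1 0).add hu
  have h := hu.mul hv
  simp only [show ((0:E2) 0) ^ 2 = 0 by simp, show ((0:E2) 1 + ((0:E2) 0)^2 : ℝ) = 0 by simp,
    zero_smul, add_zero, smul_zero, zero_add] at h
  have hgr : HasGradientAt (gEx16 0) 0 0 := by
    rw [hasGradientAt_iff_hasFDerivAt]
    show HasFDerivAt (fun θ : E2 => (θ 0) ^ 2 * (θ 1 + (θ 0) ^ 2)) _ 0
    have h' := h.congr_of_eventuallyEq (f₁ := fun θ : E2 => (θ 0) ^ 2 * (θ 1 + (θ 0) ^ 2))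
      (Eventually.of_forall fun θ => rfl)
    simpa using h'
  exact hgr.gradient

lemma grad_g1 : gradient (gEx16 1) (0:E2) = EuclideanSpace.single 1 1 := by
  have hgr : HasGradientAt (gEx16 1) (EuclideanSpace.single 1 1) 0 := by
    rw [hasGradientAt_iff_hasFDerivAt]
    have heq : (InnerProductSpace.toDual ℝ E2) (EuclideanSpace.single 1 1)
        = (EuclideanSpace.proj 1 : E2 →L[ℝ] ℝ) := by
      ext v
      simp [InnerProductSpace.toDual_apply_apply, EuclideanSpace.inner_single_left]
    rw [heq]
    exact hproj 1 0
  exact hgr.gradient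

lemma lcone_eq : lcone gEx16 0 = {t : E2 | t 1 ≤ 0} := by
  ext t
  simp only [lcone, Set.mem_setOf_eq]
  constructor
  · intro h
    have := h 1 (by simp [gEx16])
    rw [grad_g1] at this
    simpa [EuclideanSpace.inner_single_left] using this
  · intro ht j hj
    fin_cases j
    · show ⟪gradient (gEx16 0) 0, t⟫ ≤ 0
      rw [grad_g0]; simp
    · show ⟪gradient (gEx16 1) 0, t⟫ ≤ 0
      rw [grad_g1]; simpa [EuclideanSpace.inner_single_left] using ht

lemma abs_coord_le (x : E2) (i : Fin 2) : |x i| ≤ ‖x‖ := by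
  have h := abs_real_inner_le_norm (EuclideanSpace.single i (1:ℝ)) x
  simpa [EuclideanSpace.inner_single_left, EuclideanSpace.norm_single] using h

lemma coord_dist_le (x a : E2) (i : Fin 2) : |x i - a i| ≤ dist x a := by
  rw [dist_eq_norm]
  simpa using abs_coord_le (x - a) i

lemma assump3'_fails : ∀ η > (0:ℝ), ∀ C > (0:ℝ), ∃ θ ∈ Box, ‖θ‖ ≤ η ∧
    Qcrit gEx16 θ < C * infDist θ idSetEx16 := by
  intro η hη C hC
  set ε : ℝ := min η (min 1 (Real.sqrt C / 3)) with hε_def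
  have hε : 0 < ε := by
    apply lt_min hη
    exact lt_min one_pos (by positivity)
  have hε1 : ε ≤ 1 := le_trans (min_le_right _ _) (min_le_left _ _)
  have hεη : ε ≤ η := min_le_left _ _
  have hεC : ε ^ 2 < C / 4 := by
    have h3 : ε ≤ Real.sqrt C / 3 := le_trans (min_le_right _ _) (min_le_right _ _)
    have hs : Real.sqrt C ^ 2 = C := Real.sq_sqrt hC.le
    nlinarith [Real.sqrt_nonneg C, hε]
  refine ⟨EuclideanSpace.single 0 ε, ⟨?_, ?_⟩, ?_, ?_⟩
  · simp [Set.mem_Icc]; constructor <;> linarith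
  · simp [Set.mem_Icc, EuclideanSpace.single_apply]
  · rw [EuclideanSpace.norm_single, Real.norm_eq_abs, abs_of_pos hε]; exact hεη
  · set θ : E2 := EuclideanSpace.single 0 ε with hθdef
    have hθ0 : θ 0 = ε := by simp [hθdef, EuclideanSpace.single_apply]
    have hθ1 : θ 1 = 0 := by simp [hθdef, EuclideanSpace.single_apply]
    -- Q value
    have hg0 : gEx16 0 θ = ε ^ 4 := by simp [gEx16, hθ0, hθ1]; ring
    have hg1 : gEx16 1 θ = 0 := by simp [gEx16, hθ1]
    have hQ : Qcrit gEx16 θ = ε ^ 4 := by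
      have hsup : (⨆ j, gEx16 j θ) = ε ^ 4 := by
        apply le_antisymm
        · apply ciSup_le
          intro j; fin_cases j
          · show gEx16 0 θ ≤ ε ^ 4
            rw [hg0]
          · show gEx16 1 θ ≤ ε ^ 4
            rw [hg1]; positivity
        · exact hg0 ▸ le_ciSup (Finite.bddAbove_range fun j => gEx16 j θ) 0
      rw [Qcrit, hsup, max_eq_right (by positivity)]
    -- infDist lower bound
    have hlb : ε ^ 2 / 4 ≤ infDist θ idSetEx16 := by
      by_contra hcon
      push_neg at hcon
      obtain ⟨a, ha, hda⟩ := (infDist_lt_iff ⟨0, zero_mem⟩).mp hcon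
      suffices h : ε ^ 2 / 4 ≤ dist θ a by linarith
      obtain ⟨habox, ha0, ha1⟩ := (mem_idSet_iff a).mp ha
      by_cases hc : ε / 2 ≤ |ε - a 0|
      · calc ε ^ 2 / 4 ≤ ε / 2 := by nlinarith
          _ ≤ |ε - a 0| := hc
          _ = |θ 0 - a 0| := by rw [hθ0]
          _ ≤ dist θ a := coord_dist_le θ a 0
      · push_neg at hc
        have ha0pos : ε / 2 < a 0 := by
          have := abs_lt.mp hc
          linarith [this.1, this.2]
        have hsum : a 1 + (a 0) ^ 2 ≤ 0 := by nlinarith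
        have : ε ^ 2 / 4 ≤ -(a 1) := by nlinarith
        calc ε ^ 2 / 4 ≤ -(a 1) := this
          _ ≤ |θ 1 - a 1| := by rw [hθ1, zero_sub, abs_neg]; exact neg_le_abs _
          _ ≤ dist θ a := coord_dist_le θ a 1
    have hQlt : ε ^ 4 < C * (ε ^ 2 / 4) := by nlinarith [mul_pos hε hε]
    rw [hQ]
    calc ε ^ 4 < C * (ε ^ 2 / 4) := hQlt
      _ ≤ C * infDist θ idSetEx16 := by
        apply mul_le_mul_of_nonneg_left hlb hC.le

lemma tcone_eq : tcone idSetEx16 0 = {t : E2 | t 1 ≤ 0} := by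
  ext t
  simp only [tcone, Set.mem_insert_iff, Set.mem_setOf_eq]
  constructor
  · rintro (rfl | ⟨u, hu, -, hlim⟩)
    · simp
    · rcases eq_or_ne t 0 with rfl | htne
      · simp
      · have h1 : Tendsto (fun n => (‖u n - 0‖⁻¹ • (u n - 0)) 1)
            atTop (𝓝 ((‖t‖⁻¹ • t) 1)) :=
          ((EuclideanSpace.proj (𝕜 := ℝ) (1 : Fin 2)).continuous.tendsto _).comp hlim
        have hle : (‖t‖⁻¹ • t) 1 ≤ 0 := by
          refine le_of_tendsto h1 (Eventually.of_forall fun n => ?_)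
          have hn1 : u n 1 ≤ 0 := ((mem_idSet_iff (u n)).mp (hu n).1).2.2
          simp only [sub_zero, PiLp.smul_apply, smul_eq_mul]
          exact mul_nonpos_of_nonneg_of_nonpos (by positivity) hn1
        have hnorm : (0:ℝ) < ‖t‖⁻¹ := by
          rw [inv_pos]; exact norm_pos_iff.mpr htne
        simp only [PiLp.smul_apply, smul_eq_mul] at hle
        nlinarith
  · intro ht
    rcases eq_or_ne t 0 with rfl | htne
    · left; rfl
    · right
      set K : ℝ := 1 + |t 0| + |t 1| + (t 0) ^ 2 with hK_def
      have hK1 : (1:ℝ) ≤ K := by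
        rw [hK_def]
        nlinarith [abs_nonneg (t 0), abs_nonneg (t 1), sq_nonneg (t 0)]
      set m : ℕ → ℝ := fun n => (n : ℝ) + K with hm_def
      have hm : ∀ n, 0 < m n := fun n => by
        have : (0:ℝ) ≤ (n:ℝ) := Nat.cast_nonneg n
        simp only [hm_def]; linarith
      have hKm : ∀ n, K ≤ m n := fun n => by
        have : (0:ℝ) ≤ (n:ℝ) := Nat.cast_nonneg n
        simp only [hm_def]; linarith
      set w : ℕ → E2 := fun n => t - ((t 0) ^ 2 / m n) • EuclideanSpace.single 1 1
        with hw_def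
      set u : ℕ → E2 := fun n => (m n)⁻¹ • w n with hu_def
      clear_value K m w u
      have hu0 : ∀ n, u n 0 = (m n)⁻¹ * t 0 := fun n => by
        simp [hu_def, hw_def, EuclideanSpace.single_apply]
      have hu1 : ∀ n, u n 1 = (m n)⁻¹ * (t 1 - (t 0) ^ 2 / m n) := fun n => by
        simp [hu_def, hw_def, EuclideanSpace.single_apply]
      -- membership
      have hmem : ∀ n, u n ∈ idSetEx16 := by
        intro n
        rw [mem_idSet_iff]
        have hmn := hm n
        have hKn := hKm n
        refine ⟨⟨?_, ?_⟩, ?_, ?_⟩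
        · rw [hu0 n]
          constructor
          · rw [neg_le]
            calc -((m n)⁻¹ * t 0) ≤ |(m n)⁻¹ * t 0| := neg_le_abs _
              _ = (m n)⁻¹ * |t 0| := by
                  rw [abs_mul, abs_of_pos (inv_pos.mpr hmn)]
              _ ≤ 1 := by
                  rw [inv_mul_le_one₀ hmn]
                  simp only [hK_def] at hKn ⊢
                  nlinarith [abs_nonneg (t 0), abs_nonneg (t 1), sq_nonneg (t 0)]
          · calc (m n)⁻¹ * t 0 ≤ (m n)⁻¹ * |t 0| := by
                  apply mul_le_mul_of_nonneg_left (le_abs_self _) (inv_pos.mpr hmn).le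
              _ ≤ 1 := by
                  rw [inv_mul_le_one₀ hmn]
                  simp only [hK_def] at hKn ⊢
                  nlinarith [abs_nonneg (t 0), abs_nonneg (t 1), sq_nonneg (t 0)]
        · rw [hu1 n]
          have habs : |t 1 - (t 0) ^ 2 / m n| ≤ m n := by
            have h1 : (t 0) ^ 2 / m n ≤ (t 0) ^ 2 := by
              rw [div_le_iff₀ hmn]; nlinarith [sq_nonneg (t 0)]
            have h2 : (0:ℝ) ≤ (t 0) ^ 2 / m n := by positivity
            rw [abs_sub_comm, abs_le]
            constructor
            · show -(m n) ≤ t 0 ^ 2 / m n - t 1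
              have ht2 : t 1 ≤ (0:ℝ) := ht
              linarith
            · show t 0 ^ 2 / m n - t 1 ≤ m n
              have ht2 : t 1 ≤ (0:ℝ) := ht
              simp only [hK_def] at hKn
              have h3 := neg_le_abs (t 1)
              have h4 := abs_nonneg (t 0)
              linarith
          rw [abs_le] at habs
          constructor
          · rw [neg_le]
            calc -((m n)⁻¹ * (t 1 - (t 0) ^ 2 / m n))
                = (m n)⁻¹ * -(t 1 - (t 0) ^ 2 / m n) := by ring
              _ ≤ (m n)⁻¹ * m n := by
                  apply mul_le_mul_of_nonneg_left _ (inv_pos.mpr hmn).le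
                  linarith
              _ = 1 := inv_mul_cancel₀ hmn.ne'
          · calc (m n)⁻¹ * (t 1 - (t 0) ^ 2 / m n) ≤ (m n)⁻¹ * m n := by
                  apply mul_le_mul_of_nonneg_left habs.2 (inv_pos.mpr hmn).le
              _ = 1 := inv_mul_cancel₀ hmn.ne'
        · -- g1 ≤ 0
          have hsum : u n 1 + (u n 0) ^ 2 = (m n)⁻¹ * t 1 := by
            rw [hu0 n, hu1 n]
            field_simp
            ring
          rw [hsum]
          apply mul_nonpos_of_nonneg_of_nonpos (sq_nonneg _)
          exact mul_nonpos_of_nonneg_of_nonpos (inv_pos.mpr hmn).le ht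
        · -- g2 ≤ 0
          rw [hu1 n]
          apply mul_nonpos_of_nonneg_of_nonpos (inv_pos.mpr hmn).le
          have : (0:ℝ) ≤ (t 0) ^ 2 / m n := by positivity
          linarith
      have hne : ∀ n, u n ≠ 0 := by
        intro n hn
        rcases eq_or_ne (t 0) 0 with ht0 | ht0
        · have ht1 : t 1 ≠ 0 := by
            intro h1
            exact htne (e2_ext (by simpa using ht0) (by simpa using h1))
          have : u n 1 = 0 := by rw [hn]; simp
          rw [hu1 n, ht0] at this
          simp only [zero_pow, ne_eq, OfNat.ofNat_ne_zero, not_false_eq_true,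
            zero_div, sub_zero] at this
          exact ht1 (by
            rcases mul_eq_zero.mp this with h | h
            · exact absurd h (inv_ne_zero (hm n).ne')
            · exact h)
        · have : u n 0 = 0 := by rw [hn]; simp
          rw [hu0 n] at this
          rcases mul_eq_zero.mp this with h | h
          · exact absurd h (inv_ne_zero (hm n).ne')
          · exact ht0 h
      -- tendsto
      have hminv : Tendsto (fun n => (m n)⁻¹) atTop (𝓝 0) := by
        apply Tendsto.inv_tendsto_atTop
        rw [hm_def]
        exact tendsto_atTop_add_const_right _ K tendsto_natCast_atTop_atTop
      have hwt : Tendsto w atTop (𝓝 t) := by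
        have hc : Tendsto (fun n => (t 0) ^ 2 / m n) atTop (𝓝 0) := by
          simp only [div_eq_mul_inv]
          simpa using hminv.const_mul ((t 0) ^ 2)
        have := hc.smul_const (EuclideanSpace.single (1 : Fin 2) (1:ℝ))
        rw [zero_smul] at this
        have h5 := (tendsto_const_nhds (x := t)).sub this
        rw [sub_zero] at h5
        rw [hw_def]
        exact h5
      have hut : Tendsto u atTop (𝓝 0) := by
        rw [hu_def]
        have := hminv.smul hwt
        rw [zero_smul] at this
        exact this
      refine ⟨u, fun n => ⟨hmem n, hne n⟩, hut, ?_⟩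
      have hkey : ∀ n, ‖u n - 0‖⁻¹ • (u n - 0) = ‖w n‖⁻¹ • w n := by
        intro n
        rw [sub_zero, hu_def]
        rw [norm_smul, Real.norm_eq_abs, abs_of_pos (inv_pos.mpr (hm n)),
          mul_inv, inv_inv, smul_smul]
        congr 1
        rw [mul_comm (m n), mul_assoc, mul_inv_cancel₀ (hm n).ne', mul_one]
      have hcont : ContinuousAt (fun v : E2 => ‖v‖⁻¹ • v) t := by
        have h1 : ContinuousAt (fun v : E2 => ‖v‖⁻¹) t :=
          (continuousAt_id.norm).inv₀ (norm_ne_zero_iff.mpr htne)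
        exact h1.smul continuousAt_id
      have := hcont.tendsto.comp hwt
      rw [funext hkey]
      exact this

/-- Third counterexample: the support set in direction `p = (0,1)` is `{(0,0)}`, ACQ
holds at `(0,0)` (tangent and linearized cones agree and equal the lower half plane),
yet Assumption 3′ fails at `(0,0)`. -/
theorem example16_ACQ_without_assumption3' :
    suppSet idSetEx16 pvec = {0} ∧
    tcone idSetEx16 0 = {t : E2 | t 1 ≤ 0} ∧
    lcone gEx16 0 = {t : E2 | t 1 ≤ 0} ∧
    (∀ η > (0:ℝ), ∀ C > (0:ℝ), ∃ θ ∈ Box, ‖θ‖ ≤ η ∧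
      Qcrit gEx16 θ < C * infDist θ idSetEx16) :=
  ⟨suppSet_eq, tcone_eq, lcone_eq, assump3'_fails⟩
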